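/- Let α = (α_1,...,α_s), β be finite multisets of positive integers with minimum element α_1 of α, and C, D multisets of nonnegative integers each containing 0 exactly once with finite multiplicities. Let n be a positive integer. If α and β agree as multisets on [1, α_1·n], and R_{C,α}(m) = R_{D,β}(m) for all m ≤ α_1·n, then C and D agree as multisets on [0, n]. -/

import Mathlib

/-- Representation function for a multiset of nonnegative integers given by its
multiplicity function `χ` and a coefficient vector `a` of positive integers:
`Rm χ a n` counts indexed tuples (choices of elements of the multiset, respecting
multiplicity) with `∑ a i * c_{j i} = n`. -/
def Rm (χ : ℕ → ℕ) {ι : Type} [Fintype ι] [DecidableEq ι] (a : ι → ℕ) (n : ℕ) : ℕ :=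
  ∑ v : ι → Fin (n + 1), if (∑ i, a i * (v i : ℕ)) = n then ∏ i, χ (v i) else 0

open Polynomial Finset

/-- equality of coefficients up to degree N -/
def EqBelow (N : ℕ) (p q : Polynomial ℕ) : Prop := ∀ j ≤ N, p.coeff j = q.coeff j

lemma EqBelow.refl {N : ℕ} {p : Polynomial ℕ} : EqBelow N p p := fun _ _ => Eq.refl _

lemma EqBelow.mul {N : ℕ} {p p' q q' : Polynomial ℕ} (h : EqBelow N p p')
    (h' : EqBelow N q q') : EqBelow N (p * q) (p' * q') := by
  intro j hj
  rw [coeff_mul, coeff_mul]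
  refine Finset.sum_congr rfl fun x hx => ?_
  rw [Finset.HasAntidiagonal.mem_antidiagonal] at hx
  rw [h x.1 (by omega), h' x.2 (by omega)]

lemma EqBelow.pow {N : ℕ} {p q : Polynomial ℕ} (h : EqBelow N p q) (e : ℕ) :
    EqBelow N (p ^ e) (q ^ e) := by
  induction e with
  | zero => simpa using EqBelow.refl
  | succ e ih => rw [pow_succ, pow_succ]; exact ih.mul h

lemma EqBelow.prod {N : ℕ} {α : Type*} {s : Finset α} {f g : α → Polynomial ℕ}
    (h : ∀ i ∈ s, EqBelow N (f i) (g i)) :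
    EqBelow N (∏ i ∈ s, f i) (∏ i ∈ s, g i) := by
  induction s using Finset.cons_induction with
  | empty => simpa using EqBelow.refl
  | cons a s ha ih =>
    rw [Finset.prod_cons, Finset.prod_cons]
    exact (h a (Finset.mem_cons_self a s)).mul
      (ih fun i hi => h i (Finset.mem_cons_of_mem hi))

lemma coeff_sum_CX (χ : ℕ → ℕ) (k : ℕ) (S : Finset ℕ) (j : ℕ) :
    (∑ c ∈ S, C (χ c) * X ^ (k * c)).coeff j
      = ∑ c ∈ S, if j = k * c then χ c else 0 := by
  rw [finset_sum_coeff]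
  refine Finset.sum_congr rfl fun c _ => ?_
  rw [coeff_C_mul, coeff_X_pow]
  split <;> simp

lemma Rm_eq_coeff {ι : Type} [Fintype ι] [DecidableEq ι] (χ : ℕ → ℕ) (w : ι → ℕ) (N : ℕ) :
    Rm χ w N = (∏ i, ∑ c ∈ Finset.range (N + 1), C (χ c) * X ^ (w i * c)).coeff N := by
  rw [Finset.prod_univ_sum, finset_sum_coeff]
  have hterm : ∀ p : ι → ℕ,
      (∏ i, C (χ (p i)) * X ^ (w i * p i)).coeff N
        = if (∑ i, w i * p i) = N then ∏ i, χ (p i) else 0 := by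
    intro p
    rw [Finset.prod_mul_distrib, ← map_prod, Finset.prod_pow_eq_pow_sum,
      coeff_C_mul, coeff_X_pow]
    split
    · rw [if_pos (by omega)]; ring
    · rw [if_neg (by omega)]; ring
  simp only [hterm]
  rw [Rm]
  refine Finset.sum_nbij' (fun v => fun i => (v i : ℕ))
    (fun p => fun i => (⟨min (p i) N, by omega⟩ : Fin (N + 1))) ?_ ?_ ?_ ?_ ?_
  · intro v _
    rw [Fintype.mem_piFinset]
    intro i
    rw [Finset.mem_range]
    exact (v i).2
  · intro p _; exact Finset.mem_univ _
  · intro v _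
    funext i
    ext
    simp only [Nat.min_def]
    have := (v i).2
    split <;> omega
  · intro p hp
    rw [Fintype.mem_piFinset] at hp
    funext i
    have := Finset.mem_range.mp (hp i)
    simp only [Nat.min_def]
    split <;> omega
  · intro v _
    rfl

lemma Rm_eq_P {ι : Type} [Fintype ι] [DecidableEq ι] (χ : ℕ → ℕ) (hχ0 : χ 0 = 1)
    (w : ι → ℕ) (α1 m : ℕ) (hα1 : 1 ≤ α1) (hm : 1 ≤ m)
    (hw : ∀ i, α1 ≤ w i ∨ α1 * m < w i) :
    Rm χ w (α1 * m)
      = (∏ k ∈ Finset.Icc 1 (α1 * m),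
          (∑ c ∈ Finset.range (m + 1), C (χ c) * X ^ (k * c))
            ^ ((Finset.univ.filter fun i => w i = k).card)).coeff (α1 * m) := by
  set N := α1 * m with hN
  have hN1 : 1 ≤ N := le_trans hm (Nat.le_mul_of_pos_left _ hα1)
  have hmN : m ≤ N := Nat.le_mul_of_pos_left _ hα1
  have hw1 : ∀ i, 1 ≤ w i := fun i => (hw i).elim (fun h => le_trans hα1 h) (fun h => by omega)
  rw [Rm_eq_coeff]
  set G : ι → Polynomial ℕ := fun i =>
    if w i ≤ N then ∑ c ∈ Finset.range (m + 1), C (χ c) * X ^ (w i * c) else 1 with hG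
  have hstep1 : (∏ i, ∑ c ∈ Finset.range (N + 1), C (χ c) * X ^ (w i * c)).coeff N
      = (∏ i, G i).coeff N := by
    refine EqBelow.prod (fun i _ => ?_) N le_rfl
    intro j hj
    rw [hG]
    simp only
    by_cases hwi : w i ≤ N
    · rw [if_pos hwi, coeff_sum_CX, coeff_sum_CX]
      have hα1wi : α1 ≤ w i := (hw i).resolve_right (by omega)
      refine (Finset.sum_subset (Finset.range_subset_range.mpr (by omega)) ?_).symm
      intro c hc hc2
      rw [Finset.mem_range] at hc hc2
      rw [if_neg]
      intro hjc
      have h1 : α1 * (m + 1) ≤ w i * c := Nat.mul_le_mul hα1wi (by omega)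
      have h2 : α1 * (m + 1) = N + α1 := by rw [hN]; ring
      omega
    · rw [if_neg hwi, coeff_sum_CX, Polynomial.coeff_one]
      rw [Finset.sum_eq_single 0]
      · simp only [Nat.mul_zero, hχ0]
      · intro c _ hc0
        rw [if_neg]
        intro hjc
        have : w i ≤ w i * c := Nat.le_mul_of_pos_right _ (by omega)
        omega
      · intro h; exact absurd (Finset.mem_range.mpr (by omega)) h
  rw [hstep1]
  congr 1
  rw [← Finset.prod_filter_mul_prod_filter_not Finset.univ (fun i => w i ≤ N) G]
  have h2 : ∏ i ∈ Finset.univ.filter (fun i => ¬ w i ≤ N), G i = 1 := by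
    refine Finset.prod_eq_one fun i hi => ?_
    rw [Finset.mem_filter] at hi
    rw [hG]; simp only [if_neg hi.2]
  rw [h2, mul_one]
  rw [← Finset.prod_fiberwise_of_maps_to (g := w) (t := Finset.Icc 1 N)
    (fun i hi => by rw [Finset.mem_filter] at hi; rw [Finset.mem_Icc]; exact ⟨hw1 i, hi.2⟩) G]
  refine Finset.prod_congr (Eq.refl _) fun k hk => ?_
  rw [Finset.mem_Icc] at hk
  have hfil : (Finset.univ.filter (fun i => w i ≤ N)).filter (fun i => w i = k)
      = Finset.univ.filter (fun i => w i = k) := by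
    rw [Finset.filter_filter]
    refine Finset.filter_congr fun i _ => ?_
    constructor
    · exact fun h => h.2
    · exact fun h => ⟨by omega, h⟩
  rw [hfil]
  have hinner : ∀ i ∈ Finset.univ.filter (fun i => w i = k),
      G i = ∑ c ∈ Finset.range (m + 1), C (χ c) * X ^ (k * c) := by
    intro i hi
    rw [Finset.mem_filter] at hi
    rw [hG]
    simp only [hi.2, if_pos hk.2]
  rw [Finset.prod_congr (Eq.refl _) hinner, Finset.prod_const]

lemma coeff_P_split (χ : ℕ → ℕ) (hχ0 : χ 0 = 1) (α1 m : ℕ) (hα1 : 1 ≤ α1) (hm : 1 ≤ m)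
    (mk : ℕ → ℕ) (hmk : ∀ k, k < α1 → mk k = 0) :
    (∏ k ∈ Finset.Icc 1 (α1 * m),
        (∑ c ∈ Finset.range (m + 1), C (χ c) * X ^ (k * c)) ^ mk k).coeff (α1 * m)
      = (∏ k ∈ Finset.Icc 1 (α1 * m),
          (∑ c ∈ Finset.range m, C (χ c) * X ^ (k * c)) ^ mk k).coeff (α1 * m)
        + mk α1 * χ m := by
  set N := α1 * m with hN
  have hN1 : 1 ≤ N := le_trans hm (Nat.le_mul_of_pos_left _ hα1)
  set g : ℕ → Polynomial ℕ := fun k => ∑ c ∈ Finset.range (m + 1), C (χ c) * X ^ (k * c)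
    with hg
  set h : ℕ → Polynomial ℕ := fun k => ∑ c ∈ Finset.range m, C (χ c) * X ^ (k * c) with hh
  have hmem : α1 ∈ Finset.Icc 1 N := by
    rw [Finset.mem_Icc]
    exact ⟨hα1, Nat.le_mul_of_pos_right _ hm⟩
  rw [← Finset.mul_prod_erase _ (fun k => g k ^ mk k) hmem,
      ← Finset.mul_prod_erase _ (fun k => h k ^ mk k) hmem]
  set R := ∏ k ∈ (Finset.Icc 1 N).erase α1, g k ^ mk k with hR
  set R' := ∏ k ∈ (Finset.Icc 1 N).erase α1, h k ^ mk k with hR'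
  set d := mk α1 with hd
  -- constant coefficients
  have hconsth : ∀ k, 1 ≤ k → (h k).coeff 0 = 1 := by
    intro k hk
    rw [hh]
    simp only
    rw [coeff_sum_CX, Finset.sum_eq_single 0]
    · rw [if_pos (by omega), hχ0]
    · intro c _ hc0
      rw [if_neg]
      intro habs
      have : 1 * 1 ≤ k * c := Nat.mul_le_mul hk (by omega)
      omega
    · intro habs; exact absurd (Finset.mem_range.mpr (by omega)) habs
  have hconstR' : R'.coeff 0 = 1 := by
    rw [hR']
    rw [show (∏ k ∈ (Finset.Icc 1 N).erase α1, h k ^ mk k).coeff 0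
        = Polynomial.constantCoeff (∏ k ∈ (Finset.Icc 1 N).erase α1, h k ^ mk k) from rfl]
    rw [map_prod]
    refine Finset.prod_eq_one fun k hk => ?_
    have hk1 : 1 ≤ k := by
      have := Finset.mem_of_mem_erase hk
      rw [Finset.mem_Icc] at this
      exact this.1
    rw [map_pow]
    rw [show Polynomial.constantCoeff (h k) = (h k).coeff 0 from rfl, hconsth k hk1, one_pow]
  -- replace R by R'
  have hRR' : EqBelow N R R' := by
    refine EqBelow.prod fun k hk => ?_
    rcases Nat.eq_zero_or_pos (mk k) with h0 | hpos
    · rw [h0, pow_zero, pow_zero]; exact EqBelow.refl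
    · have hkne : k ≠ α1 := Finset.ne_of_mem_erase hk
      have hk1 : α1 ≤ k := by
        by_contra habs
        rw [hmk k (by omega)] at hpos
        omega
      have hkgt : α1 < k := by omega
      refine EqBelow.pow (fun j hj => ?_) _
      rw [hg, hh]
      simp only
      rw [Finset.sum_range_succ, coeff_add, coeff_C_mul, coeff_X_pow, if_neg, mul_zero,
        add_zero]
      have h1 : (α1 + 1) * m ≤ k * m := Nat.mul_le_mul_right _ (by omega)
      have h2 : (α1 + 1) * m = N + m := by rw [hN]; ring
      omega
  have hkey : (g α1 ^ d * R).coeff N = (g α1 ^ d * R').coeff N :=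
    (EqBelow.mul EqBelow.refl hRR') N le_rfl
  rw [hkey]
  -- expand g α1
  have hgα1 : g α1 = h α1 + C (χ m) * X ^ N := by
    rw [hg, hh]
    simp only
    rw [Finset.sum_range_succ, hN]
  rw [hgα1, add_pow, Finset.sum_mul, finset_sum_coeff]
  have hsummand : ∀ j, (h α1 ^ j * (C (χ m) * X ^ N) ^ (d - j) * (↑(d.choose j) : Polynomial ℕ)
        * R').coeff N
      = if N * (d - j) ≤ N
          then (h α1 ^ j * C (χ m ^ (d - j)) * (↑(d.choose j) : Polynomial ℕ) * R').coeff
            (N - N * (d - j))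
          else 0 := by
    intro j
    rw [show h α1 ^ j * (C (χ m) * X ^ N) ^ (d - j) * (↑(d.choose j) : Polynomial ℕ) * R'
        = (h α1 ^ j * C (χ m ^ (d - j)) * (↑(d.choose j) : Polynomial ℕ) * R') * X ^ (N * (d - j))
        by rw [mul_pow, ← C_pow, ← pow_mul]; ring]
    rw [coeff_mul_X_pow']
  rw [Finset.sum_congr (Eq.refl _) (fun j _ => hsummand j), Finset.sum_range_succ]
  have htop : (if N * (d - d) ≤ N
      then (h α1 ^ d * C (χ m ^ (d - d)) * (↑(d.choose d) : Polynomial ℕ) * R').coeff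
        (N - N * (d - d))
      else 0) = (h α1 ^ d * R').coeff N := by
    rw [if_pos (by simp)]
    simp [Nat.sub_self]
  rw [htop]
  have hrest : ∑ j ∈ Finset.range d, (if N * (d - j) ≤ N
      then (h α1 ^ j * C (χ m ^ (d - j)) * (↑(d.choose j) : Polynomial ℕ) * R').coeff
        (N - N * (d - j))
      else 0) = d * χ m := by
    rcases Nat.eq_zero_or_pos d with h0 | hdpos
    · rw [h0]; simp
    · rw [Finset.sum_eq_single_of_mem (d - 1) (Finset.mem_range.mpr (by omega))]
      · have hd1 : d - (d - 1) = 1 := by omega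
        rw [hd1, if_pos (by omega)]
        rw [Nat.mul_one, Nat.sub_self]
        rw [mul_coeff_zero, mul_coeff_zero, mul_coeff_zero, hconstR']
        rw [show (h α1 ^ (d-1)).coeff 0 = Polynomial.constantCoeff (h α1 ^ (d-1)) from rfl,
          map_pow]
        rw [show Polynomial.constantCoeff (h α1) = (h α1).coeff 0 from rfl, hconsth α1 hα1]
        rw [coeff_C]
        rw [show ((↑(d.choose (d-1)) : Polynomial ℕ)).coeff 0
          = Polynomial.constantCoeff (↑(d.choose (d-1)) : Polynomial ℕ) from rfl, map_natCast]
        have : d.choose (d - 1) = d := by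
          rw [show d - 1 = d - 1 from rfl, Nat.choose_symm (by omega : 1 ≤ d),
            Nat.choose_one_right]
        rw [this]
        simp [pow_one]
        ring
      · intro j hj hjne
        rw [Finset.mem_range] at hj
        rw [if_neg]
        have : 2 ≤ d - j := by omega
        have h2 : N * 2 ≤ N * (d - j) := Nat.mul_le_mul_left _ this
        omega
  rw [hrest]
  exact Nat.add_comm _ _

theorem stmt_8 {s t : ℕ} (χC χD : ℕ → ℕ) (hC0 : χC 0 = 1) (hD0 : χD 0 = 1)
    (a : Fin s → ℕ) (b : Fin t → ℕ) (ha : ∀ i, 0 < a i) (hb : ∀ i, 0 < b i)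
    (α1 : ℕ) (hα1mem : ∃ i, a i = α1) (hα1min : ∀ i, α1 ≤ a i)
    (n : ℕ) (hn : 0 < n)
    (hab : ∀ k : ℕ, 1 ≤ k → k ≤ α1 * n →
      (Finset.univ.filter fun i => a i = k).card =
        (Finset.univ.filter fun j => b j = k).card)
    (hR : ∀ m ≤ α1 * n, Rm χC a m = Rm χD b m) :
    ∀ m ≤ n, χC m = χD m := by
  obtain ⟨i0, hi0⟩ := hα1mem
  have hα1 : 1 ≤ α1 := hi0 ▸ ha i0
  intro m
  induction m using Nat.strong_induction_on with
  | _ m ih =>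
  intro hmn
  rcases Nat.eq_zero_or_pos m with rfl | hm
  · rw [hC0, hD0]
  -- setup
  have hNle : α1 * m ≤ α1 * n := Nat.mul_le_mul_left _ hmn
  have hN1 : 1 ≤ α1 * m := Nat.one_le_iff_ne_zero.mpr (by positivity)
  have hwb : ∀ j, α1 ≤ b j ∨ α1 * m < b j := by
    intro j
    by_cases hbj : b j ≤ α1 * m
    · left
      have h1 : 1 ≤ b j := hb j
      have := hab (b j) h1 (le_trans hbj hNle)
      have hpos : 0 < (Finset.univ.filter fun j' => b j' = b j).card :=
        Finset.card_pos.mpr ⟨j, by simp⟩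
      rw [← this] at hpos
      obtain ⟨i, hi⟩ := Finset.card_pos.mp hpos
      simp only [Finset.mem_filter] at hi
      exact hi.2 ▸ hα1min i
    · right; omega
  have hwa : ∀ i, α1 ≤ a i ∨ α1 * m < a i := fun i => Or.inl (hα1min i)
  have key := hR (α1 * m) hNle
  rw [Rm_eq_P χC hC0 a α1 m hα1 hm hwa, Rm_eq_P χD hD0 b α1 m hα1 hm hwb] at key
  -- replace b-fibers by a-fibers
  have hfib : ∀ k ∈ Finset.Icc 1 (α1 * m),
      (Finset.univ.filter fun j => b j = k).card
        = (Finset.univ.filter fun i => a i = k).card := by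
    intro k hk
    rw [Finset.mem_Icc] at hk
    exact (hab k hk.1 (le_trans hk.2 hNle)).symm
  have keyb : (∏ k ∈ Finset.Icc 1 (α1 * m),
        (∑ c ∈ Finset.range (m + 1), C (χD c) * X ^ (k * c))
          ^ ((Finset.univ.filter fun j => b j = k).card))
      = (∏ k ∈ Finset.Icc 1 (α1 * m),
        (∑ c ∈ Finset.range (m + 1), C (χD c) * X ^ (k * c))
          ^ ((Finset.univ.filter fun i => a i = k).card)) :=
    Finset.prod_congr rfl fun k hk => by rw [hfib k hk]
  rw [keyb] at key
  set mk : ℕ → ℕ := fun k => (Finset.univ.filter fun i => a i = k).card with hmkdef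
  have hmk : ∀ k, k < α1 → mk k = 0 := by
    intro k hk
    rw [hmkdef]
    simp only [Finset.card_eq_zero, Finset.filter_eq_empty_iff]
    intro i _ hai
    have := hα1min i
    omega
  rw [coeff_P_split χC hC0 α1 m hα1 hm mk hmk,
      coeff_P_split χD hD0 α1 m hα1 hm mk hmk] at key
  -- low parts agree by induction
  have hlow : (∏ k ∈ Finset.Icc 1 (α1 * m),
        (∑ c ∈ Finset.range m, C (χC c) * X ^ (k * c)) ^ mk k)
      = (∏ k ∈ Finset.Icc 1 (α1 * m),
        (∑ c ∈ Finset.range m, C (χD c) * X ^ (k * c)) ^ mk k) := by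
    refine Finset.prod_congr rfl fun k _ => ?_
    congr 1
    refine Finset.sum_congr rfl fun c hc => ?_
    rw [Finset.mem_range] at hc
    rw [ih c (by omega) (by omega)]
  rw [hlow] at key
  have hd : 0 < mk α1 := Finset.card_pos.mpr ⟨i0, by simp [hi0]⟩
  have := Nat.add_left_cancel key
  exact Nat.eq_of_mul_eq_mul_left hd this
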